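/- arXiv:2101.04818 — 2 statements merged into one kernel-verified Lean document; each statement's English description precedes it below -/
import Mathlib

section
/- Fix m ≥ 2 and let B_m be the weighted complete bipartite graph with vertex set {a_1,…,a_m, b_1,…,b_m} and weights w(a_i,b_j) = 1 for all i,j and weight 0 on all pairs within {a_1,…,a_m} and within {b_1,…,b_m}. Let T_cat be the hierarchical clustering tree on B_m whose left subtree is the caterpillar on the leaves {a_1, b_2, b_3, …, b_m} with internal node leaf sets (from bottom up) {a_1,b_2}, {a_1,b_2,b_3}, …, {a_1,b_2,…,b_m}, whose right subtree is the analogous caterpillar on {b_1, a_2, a_3, …, a_m}, and whose root joins the two subtrees. Then rev(T_cat) = (m−1)(3m−2). -/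
open Finset

/-- A hierarchical clustering tree: a rooted binary tree with leaves labelled by vertices. -/
inductive HC (V : Type*) where
  | leaf : V → HC V
  | node : HC V → HC V → HC V

namespace HC

variable {V : Type*}

/-- The list of leaf labels of a tree, left to right. -/
def leafList : HC V → List V
  | .leaf v => [v]
  | .node l r => leafList l ++ leafList r

/-- The set of leaf labels of a tree. -/
def leaves [DecidableEq V] (t : HC V) : Finset V :=
  t.leafList.toFinset

/-- `t.cluster i j` is the leaf set of the subtree of `t` rooted at the least common
ancestor of the leaves `i` and `j` (i.e. `leaves(T[i ∨ j])`). -/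
def cluster [DecidableEq V] : HC V → V → V → Finset V
  | .leaf v, _, _ => {v}
  | .node l r, i, j =>
    if i ∈ l.leaves ∧ j ∈ l.leaves then l.cluster i j
    else if i ∈ r.leaves ∧ j ∈ r.leaves then r.cluster i j
    else (HC.node l r).leaves

/-- `t` is a hierarchical clustering tree on the whole vertex type `V`:
its leaves are in bijection with `V`. -/
def IsTreeOn [Fintype V] [DecidableEq V] (t : HC V) : Prop :=
  t.leafList.Nodup ∧ t.leaves = Finset.univ

/-- Sum of `f A B` over all internal nodes of the tree, where `A`, `B` are the
leaf sets of the two children of the internal node. -/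
def internalSum [DecidableEq V] (f : Finset V → Finset V → ℝ) : HC V → ℝ
  | .leaf _ => 0
  | .node l r => f l.leaves r.leaves + internalSum f l + internalSum f r

/-- The list of all subtrees of a tree. -/
def subtreesList : HC V → List (HC V)
  | .leaf v => [.leaf v]
  | .node l r => .node l r :: (subtreesList l ++ subtreesList r)

/-- Dasgupta's cost: sum over unordered pairs `{i,j}` of distinct vertices of
`w i j * |leaves(T[i ∨ j])|`. -/
noncomputable def cost [Fintype V] [DecidableEq V] (w : V → V → ℝ) (t : HC V) : ℝ :=
  (1 / 2) * ∑ p ∈ Finset.univ.offDiag, w p.1 p.2 * ((t.cluster p.1 p.2).card : ℝ)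

/-- Moseley–Wang revenue: sum over unordered pairs `{i,j}` of distinct vertices of
`w i j * |nonleaves(T[i ∨ j])|`. -/
noncomputable def rev [Fintype V] [DecidableEq V] (w : V → V → ℝ) (t : HC V) : ℝ :=
  (1 / 2) * ∑ p ∈ Finset.univ.offDiag,
    w p.1 p.2 * ((Finset.univ \ t.cluster p.1 p.2).card : ℝ)

/-- Cohen-Addad et al.'s value: the same formula as cost, used for dissimilarity weights. -/
noncomputable def val [Fintype V] [DecidableEq V] (w : V → V → ℝ) (t : HC V) : ℝ :=
  cost w t

end HC

/-- The total weight `W`: the sum of `w i j` over unordered pairs of distinct vertices. -/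
noncomputable def totalWeight {V : Type*} [Fintype V] [DecidableEq V] (w : V → V → ℝ) : ℝ :=
  (1 / 2) * ∑ p ∈ Finset.univ.offDiag, w p.1 p.2

/-- The merge cost of merging disjoint clusters `A` and `B`. -/
noncomputable def mergeCost {V : Type*} [Fintype V] [DecidableEq V] (w : V → V → ℝ) (A B : Finset V) : ℝ :=
  (B.card : ℝ) * ∑ a ∈ A, ∑ c ∈ Finset.univ \ (A ∪ B), w a c
    + (A.card : ℝ) * ∑ b ∈ B, ∑ c ∈ Finset.univ \ (A ∪ B), w b c

/-- The merge revenue of merging disjoint clusters `A` and `B`. -/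
noncomputable def mergeRev {V : Type*} [Fintype V] (w : V → V → ℝ) (A B : Finset V) : ℝ :=
  ((Fintype.card V : ℝ) - (A.card : ℝ) - (B.card : ℝ)) * ∑ a ∈ A, ∑ b ∈ B, w a b

/-- The average linkage between disjoint nonempty clusters `A` and `B`. -/
noncomputable def avgLinkage {V : Type*} (w : V → V → ℝ) (A B : Finset V) : ℝ :=
  (1 / ((A.card : ℝ) * (B.card : ℝ))) * ∑ a ∈ A, ∑ b ∈ B, w a b

/-- A matching encoded as an involution `f : V → V`: the matched pairs are the pairs
`{v, f v}` with `f v ≠ v`; its weight is the sum of weights of matched pairs. -/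
noncomputable def matchingWeight {V : Type*} [Fintype V] [DecidableEq V] (w : V → V → ℝ) (f : V → V) : ℝ :=
  (1 / 2) * ∑ v ∈ Finset.univ.filter (fun v => f v ≠ v), w v (f v)

/-- A perfect matching encoded as a fixed-point-free involution. -/
def IsPerfectMatching {V : Type*} (f : V → V) : Prop :=
  (∀ v, f (f v) = v) ∧ ∀ v, f v ≠ v


/-- The complete bipartite weighted graph `B_m`: vertices `a_1,...,a_m` (left) and
`b_1,...,b_m` (right), `w(a_i, b_j) = 1` for all `i, j`, and weight `0` within each side. -/
noncomputable def wB (m : ℕ) : (Fin m ⊕ Fin m) → (Fin m ⊕ Fin m) → ℝ :=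
  fun x y =>
    match x, y with
    | Sum.inl _, Sum.inr _ => 1
    | Sum.inr _, Sum.inl _ => 1
    | _, _ => 0

/-- The caterpillar tree on leaves `x 0, x 1, ..., x k`: start from the leaf `x 0` and
repeatedly join the current tree with the next leaf under a new internal node. -/
def caterpillar {V : Type*} (x : ℕ → V) : ℕ → HC V
  | 0 => HC.leaf (x 0)
  | k + 1 => HC.node (caterpillar x k) (HC.leaf (x (k + 1)))



section AuxHC
open Finset
variable {V : Type*} [DecidableEq V]

lemma HC_cluster_comm (t : HC V) (i j : V) : t.cluster i j = t.cluster j i := by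
  induction t with
  | leaf v => rfl
  | node l r ihl ihr =>
    by_cases h1 : i ∈ l.leaves <;> by_cases h2 : j ∈ l.leaves <;>
      by_cases h3 : i ∈ r.leaves <;> by_cases h4 : j ∈ r.leaves <;>
        simp [HC.cluster, h1, h2, h3, h4, ihl, ihr]

omit [DecidableEq V] in
lemma cat_leafList (x : ℕ → V) : ∀ k, (caterpillar x k).leafList = (List.range (k+1)).map x := by
  intro k
  induction k with
  | zero => rfl
  | succ k ih => simp [caterpillar, HC.leafList, ih, List.range_succ]

lemma mem_cat_leaves (x : ℕ → V) (k : ℕ) (v : V) :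
    v ∈ (caterpillar x k).leaves ↔ ∃ i ≤ k, x i = v := by
  simp [HC.leaves, cat_leafList, List.mem_map, Nat.lt_succ_iff]

lemma cluster_cat (x : ℕ → V) (k : ℕ) (hx : ∀ a b, a ≤ k → b ≤ k → x a = x b → a = b)
    (j : ℕ) (hj1 : 1 ≤ j) (hjk : j ≤ k) :
    (caterpillar x k).cluster (x 0) (x j) = ((List.range (j+1)).map x).toFinset := by
  induction k with
  | zero => omega
  | succ k ih =>
    rw [show caterpillar x (k+1) = HC.node (caterpillar x k) (HC.leaf (x (k+1))) from rfl,
      HC.cluster]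
    by_cases hcase : j ≤ k
    · rw [if_pos ⟨(mem_cat_leaves x k _).2 ⟨0, by omega, rfl⟩,
        (mem_cat_leaves x k _).2 ⟨j, hcase, rfl⟩⟩]
      exact ih (fun a b ha hb => hx a b (by omega) (by omega)) hcase
    · have hj : j = k + 1 := by omega
      rw [if_neg, if_neg]
      · rw [show (HC.node (caterpillar x k) (HC.leaf (x (k+1)))) = caterpillar x (k+1) from rfl]
        rw [HC.leaves, cat_leafList, hj]
      · rintro ⟨h0, -⟩
        have := hx 0 (k+1) (by omega) (by omega) (by simpa [HC.leaves, HC.leafList] using h0)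
        omega
      · rintro ⟨-, hmem⟩
        obtain ⟨i, hi, hxi⟩ := (mem_cat_leaves x k _).1 hmem
        have := hx i j (by omega) (by omega) hxi
        omega

omit [DecidableEq V] in
lemma cat_range_nodup (x : ℕ → V) (k : ℕ) (hx : ∀ a b, a ≤ k → b ≤ k → x a = x b → a = b) :
    ((List.range (k+1)).map x).Nodup := by
  refine List.Nodup.map_on ?_ List.nodup_range
  intro a ha b hb h
  simp only [List.mem_range, Nat.lt_succ_iff] at ha hb
  exact hx a b ha hb h

end AuxHC

theorem main_aux (m : ℕ) (hm : 2 ≤ m) (hpos : 0 < m) (xL xR : ℕ → Fin m ⊕ Fin m)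
    (hL0 : xL 0 = Sum.inl ⟨0, hpos⟩)
    (hLk : ∀ k, k ≠ 0 → ∀ (hk : k < m), xL k = Sum.inr ⟨k, hk⟩)
    (hR0 : xR 0 = Sum.inr ⟨0, hpos⟩)
    (hRk : ∀ k, k ≠ 0 → ∀ (hk : k < m), xR k = Sum.inl ⟨k, hk⟩) :
    HC.rev (wB m) (HC.node (caterpillar xL (m-1)) (caterpillar xR (m-1))) =
      ((m : ℝ) - 1) * (3 * (m : ℝ) - 2) := by
  have hinjL : ∀ a b, a ≤ m-1 → b ≤ m-1 → xL a = xL b → a = b := by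
    intro a b ha hb h
    rcases eq_or_ne a 0 with rfl | ha0 <;> rcases eq_or_ne b 0 with rfl | hb0
    · rfl
    · rw [hL0, hLk b hb0 (by omega)] at h; exact absurd h (by simp)
    · rw [hL0, hLk a ha0 (by omega)] at h; exact absurd h (by simp)
    · rw [hLk a ha0 (by omega), hLk b hb0 (by omega)] at h; simpa using h
  have hinjR : ∀ a b, a ≤ m-1 → b ≤ m-1 → xR a = xR b → a = b := by
    intro a b ha hb h
    rcases eq_or_ne a 0 with rfl | ha0 <;> rcases eq_or_ne b 0 with rfl | hb0
    · rfl
    · rw [hR0, hRk b hb0 (by omega)] at h; exact absurd h (by simp)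
    · rw [hR0, hRk a ha0 (by omega)] at h; exact absurd h (by simp)
    · rw [hRk a ha0 (by omega), hRk b hb0 (by omega)] at h; simpa using h
  set L := caterpillar xL (m-1) with hLdef
  set R := caterpillar xR (m-1) with hRdef
  have memLinl : ∀ i : Fin m, Sum.inl i ∈ L.leaves ↔ i.val = 0 := by
    intro i
    rw [hLdef, mem_cat_leaves]
    constructor
    · rintro ⟨k, hk, hxk⟩
      rcases eq_or_ne k 0 with rfl | hk0
      · rw [hL0] at hxk
        have := congrArg Fin.val (Sum.inl.inj hxk)
        simpa using this.symm
      · rw [hLk k hk0 (by omega)] at hxk; exact absurd hxk (by simp)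
    · intro hi
      exact ⟨0, by omega, by rw [hL0]; exact congrArg Sum.inl (Fin.ext (by simp [hi]))⟩
  have memLinr : ∀ j : Fin m, Sum.inr j ∈ L.leaves ↔ j.val ≠ 0 := by
    intro j
    rw [hLdef, mem_cat_leaves]
    constructor
    · rintro ⟨k, hk, hxk⟩
      rcases eq_or_ne k 0 with rfl | hk0
      · rw [hL0] at hxk; exact absurd hxk (by simp)
      · rw [hLk k hk0 (by omega)] at hxk
        have := congrArg Fin.val (Sum.inr.inj hxk)
        simp at this; omega
    · intro hj
      exact ⟨j.val, by omega, by rw [hLk j.val hj j.isLt]⟩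
  have memRinr : ∀ j : Fin m, Sum.inr j ∈ R.leaves ↔ j.val = 0 := by
    intro j
    rw [hRdef, mem_cat_leaves]
    constructor
    · rintro ⟨k, hk, hxk⟩
      rcases eq_or_ne k 0 with rfl | hk0
      · rw [hR0] at hxk
        have := congrArg Fin.val (Sum.inr.inj hxk)
        simpa using this.symm
      · rw [hRk k hk0 (by omega)] at hxk; exact absurd hxk (by simp)
    · intro hj
      exact ⟨0, by omega, by rw [hR0]; exact congrArg Sum.inr (Fin.ext (by simp [hj]))⟩
  have memRinl : ∀ i : Fin m, Sum.inl i ∈ R.leaves ↔ i.val ≠ 0 := by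
    intro i
    rw [hRdef, mem_cat_leaves]
    constructor
    · rintro ⟨k, hk, hxk⟩
      rcases eq_or_ne k 0 with rfl | hk0
      · rw [hR0] at hxk; exact absurd hxk (by simp)
      · rw [hRk k hk0 (by omega)] at hxk
        have := congrArg Fin.val (Sum.inl.inj hxk)
        simp at this; omega
    · intro hi
      exact ⟨i.val, by omega, by rw [hRk i.val hi i.isLt]⟩
  have hTuniv : (HC.node L R).leaves = Finset.univ := by
    have : (HC.node L R).leaves = L.leaves ∪ R.leaves := by
      simp [HC.leaves, HC.leafList]
    rw [this]
    apply Finset.eq_univ_of_forall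
    rintro (i | j)
    · rcases eq_or_ne i.val 0 with hi | hi
      · exact Finset.mem_union_left _ ((memLinl i).2 hi)
      · exact Finset.mem_union_right _ ((memRinl i).2 hi)
    · rcases eq_or_ne j.val 0 with hj | hj
      · exact Finset.mem_union_right _ ((memRinr j).2 hj)
      · exact Finset.mem_union_left _ ((memLinr j).2 hj)
  have hclus : ∀ i j : Fin m,
      (((Finset.univ : Finset (Fin m ⊕ Fin m)) \
        (HC.node L R).cluster (Sum.inl i) (Sum.inr j)).card : ℝ)
      = (if i.val = 0 then 1 else 0) * (if j.val = 0 then 0 else 2*(m:ℝ) - j.val - 1)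
        + (if j.val = 0 then 1 else 0) * (if i.val = 0 then 0 else 2*(m:ℝ) - i.val - 1) := by
    intro i j
    rcases eq_or_ne i.val 0 with hi | hi <;> rcases eq_or_ne j.val 0 with hj | hj
    · rw [HC.cluster, if_neg, if_neg]
      · rw [hTuniv, Finset.sdiff_self]
        simp [hi, hj]
      · rintro ⟨h1, -⟩; exact (memRinl i).1 h1 hi
      · rintro ⟨-, h2⟩; exact (memLinr j).1 h2 hj
    · -- i = 0, j ≠ 0 : pair inside L
      have h1 : Sum.inl i = xL 0 := by
        rw [hL0]; exact congrArg Sum.inl (Fin.ext (by simp [hi]))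
      have h2 : Sum.inr j = xL j.val := by rw [hLk j.val hj j.isLt]
      have hcl : (HC.node L R).cluster (Sum.inl i) (Sum.inr j)
          = ((List.range (j.val+1)).map xL).toFinset := by
        rw [HC.cluster, if_pos ⟨(memLinl i).2 hi, (memLinr j).2 hj⟩, h1, h2, hLdef]
        exact cluster_cat xL (m-1) hinjL j.val (by omega) (by omega)
      have hnd : ((List.range (j.val+1)).map xL).Nodup :=
        cat_range_nodup xL j.val (fun a b ha hb => hinjL a b (by omega) (by omega))
      have hcard : (((List.range (j.val+1)).map xL).toFinset).card = j.val + 1 := by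
        rw [List.toFinset_card_of_nodup hnd]; simp
      rw [hcl, Finset.card_sdiff_of_subset (Finset.subset_univ _), hcard, Finset.card_univ,
        Fintype.card_sum, Fintype.card_fin]
      have hle : j.val + 1 ≤ m + m := by omega
      rw [Nat.cast_sub hle]
      simp only [hi, hj, if_pos, if_neg, ite_true, ite_false]
      push_cast
      ring
    · -- i ≠ 0, j = 0 : pair inside R
      have h1 : Sum.inr j = xR 0 := by
        rw [hR0]; exact congrArg Sum.inr (Fin.ext (by simp [hj]))
      have h2 : Sum.inl i = xR i.val := by rw [hRk i.val hi i.isLt]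
      have hcl : (HC.node L R).cluster (Sum.inl i) (Sum.inr j)
          = ((List.range (i.val+1)).map xR).toFinset := by
        rw [HC.cluster, if_neg, if_pos ⟨(memRinl i).2 hi, (memRinr j).2 hj⟩]
        · rw [HC_cluster_comm, h1, h2, hRdef]
          exact cluster_cat xR (m-1) hinjR i.val (by omega) (by omega)
        · rintro ⟨hc, -⟩; exact hi ((memLinl i).1 hc)
      have hnd : ((List.range (i.val+1)).map xR).Nodup :=
        cat_range_nodup xR i.val (fun a b ha hb => hinjR a b (by omega) (by omega))
      have hcard : (((List.range (i.val+1)).map xR).toFinset).card = i.val + 1 := by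
        rw [List.toFinset_card_of_nodup hnd]; simp
      rw [hcl, Finset.card_sdiff_of_subset (Finset.subset_univ _), hcard, Finset.card_univ,
        Fintype.card_sum, Fintype.card_fin]
      have hle : i.val + 1 ≤ m + m := by omega
      rw [Nat.cast_sub hle]
      simp only [hi, hj, if_pos, if_neg, ite_true, ite_false]
      push_cast
      ring
    · rw [HC.cluster, if_neg, if_neg]
      · rw [hTuniv, Finset.sdiff_self]
        simp [hi, hj]
      · rintro ⟨-, h2⟩; exact hj ((memRinr j).1 h2)
      · rintro ⟨h1, -⟩; exact hi ((memLinl i).1 h1)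
  -- now compute the revenue
  have hdiag : ∀ v : Fin m ⊕ Fin m, wB m v v = 0 := by rintro (i|j) <;> rfl
  rw [HC.rev]
  have h1 : ∑ p ∈ (Finset.univ : Finset (Fin m ⊕ Fin m)).offDiag,
      wB m p.1 p.2 * ((Finset.univ \ (HC.node L R).cluster p.1 p.2).card : ℝ)
      = ∑ p ∈ (Finset.univ : Finset (Fin m ⊕ Fin m)) ×ˢ Finset.univ,
      wB m p.1 p.2 * ((Finset.univ \ (HC.node L R).cluster p.1 p.2).card : ℝ) := by
    apply Finset.sum_subset
    · intro p hp
      simp [Finset.mem_product]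
    · intro p hp hnp
      have hpe : p.1 = p.2 := by
        by_contra hne
        exact hnp (Finset.mem_offDiag.2 ⟨Finset.mem_univ _, Finset.mem_univ _, hne⟩)
      rw [← hpe, hdiag, zero_mul]
  rw [h1, Finset.sum_product]
  have wll : ∀ a b : Fin m, wB m (Sum.inl a) (Sum.inl b) = 0 := fun _ _ => rfl
  have wlr : ∀ a b : Fin m, wB m (Sum.inl a) (Sum.inr b) = 1 := fun _ _ => rfl
  have wrl : ∀ a b : Fin m, wB m (Sum.inr a) (Sum.inl b) = 1 := fun _ _ => rfl
  have wrr : ∀ a b : Fin m, wB m (Sum.inr a) (Sum.inr b) = 0 := fun _ _ => rfl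
  simp only [Fintype.sum_sum_type, wll, wlr, wrl, wrr, zero_mul, one_mul,
    Finset.sum_const_zero, add_zero, zero_add]
  have hswap : ∑ j : Fin m, ∑ i : Fin m,
      ((Finset.univ \ (HC.node L R).cluster (Sum.inr j) (Sum.inl i)).card : ℝ)
      = ∑ i : Fin m, ∑ j : Fin m,
      ((Finset.univ \ (HC.node L R).cluster (Sum.inl i) (Sum.inr j)).card : ℝ) := by
    rw [Finset.sum_comm]
    exact Finset.sum_congr rfl fun i _ => Finset.sum_congr rfl fun j _ => by
      rw [HC_cluster_comm]
  set S : ℝ := ∑ n ∈ Finset.range m, (if n = 0 then (0:ℝ) else 2*(m:ℝ) - n - 1) with hSdef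
  have e1 : ∑ n ∈ Finset.range m, (if n = 0 then (1:ℝ) else 0) = 1 := by
    rw [Finset.sum_ite_eq' (Finset.range m) 0 (fun _ => (1:ℝ)),
      if_pos (Finset.mem_range.2 (by omega))]
  have key : ∑ i : Fin m, ∑ j : Fin m,
      ((Finset.univ \ (HC.node L R).cluster (Sum.inl i) (Sum.inr j)).card : ℝ) = 2 * S := by
    have inner : ∀ i : Fin m, ∑ j : Fin m,
        ((if i.val = 0 then (1:ℝ) else 0) * (if j.val = 0 then 0 else 2*(m:ℝ) - j.val - 1)
          + (if j.val = 0 then (1:ℝ) else 0) * (if i.val = 0 then (0:ℝ) else 2*(m:ℝ) - i.val - 1))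
        = (if i.val = 0 then (1:ℝ) else 0) * S
          + (if i.val = 0 then (0:ℝ) else 2*(m:ℝ) - i.val - 1) := by
      intro i
      rw [Finset.sum_add_distrib, ← Finset.mul_sum, ← Finset.sum_mul]
      congr 1
      · congr 1
        rw [hSdef, ← Fin.sum_univ_eq_sum_range (fun n => if n = 0 then (0:ℝ) else 2*(m:ℝ) - n - 1)]
      · rw [← Fin.sum_univ_eq_sum_range (fun n => if n = 0 then (1:ℝ) else 0)] at e1
        rw [e1, one_mul]
    calc ∑ i : Fin m, ∑ j : Fin m,
        ((Finset.univ \ (HC.node L R).cluster (Sum.inl i) (Sum.inr j)).card : ℝ)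
        = ∑ i : Fin m, ((if i.val = 0 then (1:ℝ) else 0) * S
          + (if i.val = 0 then (0:ℝ) else 2*(m:ℝ) - i.val - 1)) := by
          refine Finset.sum_congr rfl fun i _ => ?_
          rw [← inner i]
          exact Finset.sum_congr rfl fun j _ => hclus i j
      _ = (∑ i : Fin m, (if i.val = 0 then (1:ℝ) else 0)) * S
          + ∑ i : Fin m, (if i.val = 0 then (0:ℝ) else 2*(m:ℝ) - i.val - 1) := by
          rw [Finset.sum_add_distrib, Finset.sum_mul]
      _ = 1 * S + S := by
          rw [← Fin.sum_univ_eq_sum_range (fun n => if n = 0 then (1:ℝ) else 0)] at e1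
          rw [e1, hSdef,
            ← Fin.sum_univ_eq_sum_range (fun n => if n = 0 then (0:ℝ) else 2*(m:ℝ) - n - 1)]
      _ = 2 * S := by ring
  rw [hswap, key]
  have hG : (∑ n ∈ Finset.range m, (n:ℝ)) * 2 = m * ((m:ℝ) - 1) := by
    have h := Finset.sum_range_id_mul_two m
    have h2 : (((∑ n ∈ Finset.range m, n) * 2 : ℕ) : ℝ) = ((m * (m-1) : ℕ) : ℝ) := by
      rw [h]
    push_cast [Nat.cast_sub (by omega : 1 ≤ m)] at h2
    convert h2 using 2
  have hS : S = 2*(m:ℝ)*m - (∑ n ∈ Finset.range m, (n:ℝ)) - m - (2*(m:ℝ) - 1) := by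
    have hrw : ∀ n ∈ Finset.range m, (if n = 0 then (0:ℝ) else 2*(m:ℝ) - n - 1)
        = (2*(m:ℝ) - n - 1) - (if n = 0 then 2*(m:ℝ) - n - 1 else 0) := by
      intro n _
      rcases eq_or_ne n 0 with rfl | h <;> simp [*]
    rw [hSdef, Finset.sum_congr rfl hrw, Finset.sum_sub_distrib,
      Finset.sum_ite_eq' (Finset.range m) 0 (fun n => 2*(m:ℝ) - (n:ℝ) - 1),
      if_pos (Finset.mem_range.2 (by omega))]
    simp only [Finset.sum_sub_distrib, Finset.sum_const, Finset.card_range, nsmul_eq_mul,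
      mul_one]
    push_cast
    ring
  linear_combination 2 * hS - hG

/-- On the complete bipartite graph `B_m` (`m ≥ 2`), the tree `T_cat` joining the
caterpillar on the leaves `a_1, b_2, b_3, ..., b_m` (bottom-up) with the caterpillar on the
leaves `b_1, a_2, a_3, ..., a_m` has revenue `(m − 1)(3m − 2)`. -/
theorem stmt18 (m : ℕ) (hm : 2 ≤ m) :
    HC.rev (wB m)
      (HC.node
        (caterpillar
          (fun k => if k = 0 then (Sum.inl ⟨0, by omega⟩ : Fin m ⊕ Fin m)
            else Sum.inr ⟨k % m, Nat.mod_lt _ (by omega)⟩) (m - 1))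
        (caterpillar
          (fun k => if k = 0 then (Sum.inr ⟨0, by omega⟩ : Fin m ⊕ Fin m)
            else Sum.inl ⟨k % m, Nat.mod_lt _ (by omega)⟩) (m - 1))) =
      ((m : ℝ) - 1) * (3 * (m : ℝ) - 2) := by
  apply main_aux m hm (by omega)
  · simp
  · intro k hk hkm
    simp [hk, Nat.mod_eq_of_lt hkm]
  · simp
  · intro k hk hkm
    simp [hk, Nat.mod_eq_of_lt hkm]
end

section
/- Let V be a finite set of n vertices with a symmetric nonnegative weight function w on unordered pairs of distinct vertices, let W_max = max over pairs of w, let k be a nonnegative integer with 2k ≤ n, and let Q be a real number with Q ≥ W_max and Q ≥ 0. Form the extended weighted graph G' on vertex set V ∪ U, where U is a disjoint set of n − 2k new vertices, with weights: w(u,v) on pairs within V, Q on every pair consisting of one vertex of U and one vertex of V, and 0 on pairs within U. Then the maximum total weight of a matching in G' (a set of pairwise disjoint unordered pairs of vertices of V ∪ U) equals (n − 2k)·Q + M_k, where M_k is the maximum total weight of a matching in V consisting of at most k pairs. -/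
open Finset

/-- The extended weight function on `V ⊕ U`: original weights within `V`, weight `Q`
between `V` and the dummy vertices `U`, and weight `0` within `U`. -/
noncomputable def extWeight {V U : Type*} (w : V → V → ℝ) (Q : ℝ) :
    (V ⊕ U) → (V ⊕ U) → ℝ :=
  fun x y =>
    match x, y with
    | Sum.inl a, Sum.inl b => w a b
    | Sum.inl _, Sum.inr _ => Q
    | Sum.inr _, Sum.inl _ => Q
    | Sum.inr _, Sum.inr _ => 0


lemma stmt19_remove_pair {V : Type*} [Fintype V] [DecidableEq V] (w : V → V → ℝ)
    (hsymm : ∀ i j, w i j = w j i) (f : V → V) (hf : ∀ v, f (f v) = v)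
    (v0 : V) (h0 : f v0 ≠ v0) :
    ∃ f' : V → V, (∀ v, f' (f' v) = v) ∧
      (Finset.univ.filter fun v => f' v ≠ v)
        = (Finset.univ.filter fun v => f v ≠ v) \ {v0, f v0} ∧
      matchingWeight w f = matchingWeight w f' + w v0 (f v0) := by
  classical
  set f' : V → V := fun v => if v = v0 ∨ v = f v0 then v else f v with hf'
  have hne' : ∀ v, ¬(v = v0 ∨ v = f v0) → f' v = f v := by
    intro v h; simp [hf', h]
  have hmem : ∀ v, ¬(v = v0 ∨ v = f v0) → ¬(f v = v0 ∨ f v = f v0) := by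
    intro v h hc
    rcases hc with hc | hc
    · exact h (Or.inr (by rw [← hc, hf v]))
    · exact h (Or.inl (by have := congrArg f hc; rwa [hf, hf] at this))
  have hinv : ∀ v, f' (f' v) = v := by
    intro v
    by_cases h : v = v0 ∨ v = f v0
    · simp [hf', h]
    · rw [hne' v h, hne' (f v) (hmem v h), hf]
  have hfilt : (Finset.univ.filter fun v => f' v ≠ v)
      = (Finset.univ.filter fun v => f v ≠ v) \ {v0, f v0} := by
    ext v
    by_cases h : v = v0 ∨ v = f v0
    · rcases h with h | h <;> subst h <;> simp [hf', hf]
    · push_neg at h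
      simp [hf', h, not_or.mpr h]
  refine ⟨f', hinv, hfilt, ?_⟩
  have hsub : ({v0, f v0} : Finset V) ⊆ Finset.univ.filter fun v => f v ≠ v := by
    intro v hv
    simp only [mem_insert, mem_singleton] at hv
    rcases hv with rfl | rfl
    · simpa using h0
    · simp only [mem_filter, mem_univ, true_and, hf]
      exact fun h => h0 h.symm
  have hsum := Finset.sum_sdiff (f := fun v => w v (f v)) hsub
  have hpair : ∑ v ∈ ({v0, f v0} : Finset V), w v (f v)
      = 2 * w v0 (f v0) := by
    rw [Finset.sum_pair (fun h => h0 h.symm), hf, hsymm (f v0) v0]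
    ring
  have hcongr : ∑ v ∈ (Finset.univ.filter fun v => f v ≠ v) \ {v0, f v0}, w v (f v)
      = ∑ v ∈ (Finset.univ.filter fun v => f' v ≠ v), w v (f' v) := by
    rw [hfilt]
    refine Finset.sum_congr rfl fun v hv => ?_
    simp only [mem_sdiff, mem_insert, mem_singleton, not_or] at hv
    rw [hne' v (not_or.mpr hv.2)]
  unfold matchingWeight
  rw [← hsum, hpair, hcongr]
  ring

lemma stmt19_bound_lemma {V : Type*} [Fintype V] [DecidableEq V] (k : ℕ)
    (w : V → V → ℝ) (hsymm : ∀ i j, w i j = w j i)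
    (Q : ℝ) (hQ0 : 0 ≤ Q) (hQmax : ∀ i j, i ≠ j → w i j ≤ Q)
    (Mk : ℝ)
    (hMk : IsGreatest {x : ℝ | ∃ f : V → V, (∀ v, f (f v) = v) ∧
        (Finset.univ.filter fun v => f v ≠ v).card ≤ 2 * k ∧
        x = matchingWeight w f} Mk) :
    ∀ j : ℕ, ∀ f : V → V, (∀ v, f (f v) = v) →
      (Finset.univ.filter fun v => f v ≠ v).card ≤ 2 * k + 2 * j →
      matchingWeight w f ≤ Mk + j * Q := by
  intro j
  induction j with
  | zero =>
    intro f hf hc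
    simpa using hMk.2 ⟨f, hf, by simpa using hc, rfl⟩
  | succ j ih =>
    intro f hf hc
    by_cases h : (Finset.univ.filter fun v => f v ≠ v).card ≤ 2 * k + 2 * j
    · have := ih f hf h
      have : (j : ℝ) * Q ≤ (j + 1 : ℕ) * Q := by
        push_cast; nlinarith
      push_cast
      push_cast at ih
      nlinarith [ih f hf h]
    · push_neg at h
      have hne : (Finset.univ.filter fun v => f v ≠ v).Nonempty := by
        rw [← Finset.card_pos]; omega
      obtain ⟨v0, hv0⟩ := hne
      simp only [mem_filter, mem_univ, true_and] at hv0
      obtain ⟨f', hinv, hfilt, heq⟩ := stmt19_remove_pair w hsymm f hf v0 hv0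
      have hsub : ({v0, f v0} : Finset V) ⊆ Finset.univ.filter fun v => f v ≠ v := by
        intro v hv
        simp only [mem_insert, mem_singleton] at hv
        rcases hv with rfl | rfl
        · simpa using hv0
        · simp only [mem_filter, mem_univ, true_and, hf]
          exact fun h => hv0 h.symm
      have hcard' : (Finset.univ.filter fun v => f' v ≠ v).card ≤ 2 * k + 2 * j := by
        rw [hfilt, Finset.card_sdiff_of_subset hsub, Finset.card_pair (fun h => hv0 h.symm)]
        omega
      have hw : w v0 (f v0) ≤ Q := hQmax v0 (f v0) (fun h => hv0 h.symm)
      have := ih f' hinv hcard'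
      rw [heq]
      push_cast
      linarith

/-- Let `|V| = n`, `2k ≤ n`, `w` a symmetric nonnegative weight function on `V`, and
`Q ≥ 0` with `Q ≥ w i j` for all distinct `i, j` (i.e. `Q ≥ W_max`).  If `Mk` is the
maximum weight of a matching in `V` with at most `k` pairs, then the maximum weight of a
matching in the extended graph on `V ⊕ Fin (n − 2k)` is `(n − 2k)·Q + Mk`.
Matchings are encoded as involutions; the matched pairs are the non-fixed orbits. -/
theorem stmt19 {V : Type*} [Fintype V] [DecidableEq V] (n k : ℕ)
    (hcard : Fintype.card V = n) (hk : 2 * k ≤ n)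
    (w : V → V → ℝ) (hsymm : ∀ i j, w i j = w j i) (hnonneg : ∀ i j, 0 ≤ w i j)
    (Q : ℝ) (hQ0 : 0 ≤ Q) (hQmax : ∀ i j, i ≠ j → w i j ≤ Q)
    (Mk : ℝ)
    (hMk : IsGreatest {x : ℝ | ∃ f : V → V, (∀ v, f (f v) = v) ∧
        (Finset.univ.filter fun v => f v ≠ v).card ≤ 2 * k ∧
        x = matchingWeight w f} Mk) :
    IsGreatest {x : ℝ | ∃ g : (V ⊕ Fin (n - 2 * k)) → (V ⊕ Fin (n - 2 * k)),
        (∀ u, g (g u) = u) ∧ x = matchingWeight (extWeight w Q) g}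
      (((n - 2 * k : ℕ) : ℝ) * Q + Mk) := by
  constructor
  · -- membership
      classical
      obtain ⟨f, hfinv, hfc, hfw⟩ := hMk.1
      set m := n - 2 * k with hm
      set F := Finset.univ.filter (fun v => f v = v) with hF
      have hFf : ∀ v ∈ F, f v = v := fun v hv => (mem_filter.mp hv).2
      have hFcard : m ≤ F.card := by
        have h3 : F.card + (Finset.univ.filter fun v => f v ≠ v).card = n := by
          rw [hF]
          have := Finset.card_filter_add_card_filter_not
            (s := (Finset.univ : Finset V)) (p := fun v => f v = v)
          simpa [hcard] using this
        omega
      obtain ⟨T, hTF, hTcard⟩ := Finset.exists_subset_card_eq hFcard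
      set ε := T.equivFinOfCardEq hTcard with hε
      set g : V ⊕ Fin m → V ⊕ Fin m := fun x =>
        match x with
        | Sum.inl v => if h : v ∈ T then Sum.inr (ε ⟨v, h⟩) else Sum.inl (f v)
        | Sum.inr i => Sum.inl ((ε.symm i : T) : V) with hg
      have hTfix : ∀ v ∈ T, f v = v := fun v hv => hFf v (hTF hv)
      have hginv : ∀ u, g (g u) = u := by
        intro u
        match u with
        | Sum.inl v =>
          by_cases h : v ∈ T
          · simp [hg, h]
          · have hfvT : f v ∉ T := by
              intro hc
              have : f (f v) = f v := hTfix _ hc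
              rw [hfinv] at this
              exact h (this ▸ hc)
            simp [hg, h, hfvT, hfinv]
        | Sum.inr i =>
          have hmem : ((ε.symm i : T) : V) ∈ T := (ε.symm i).2
          simp [hg, hmem]
      refine ⟨g, hginv, ?_⟩
      rw [matchingWeight, Finset.sum_filter, Fintype.sum_sum_type]
      have h1 : ∀ i : Fin m,
          (if g (Sum.inr i) ≠ Sum.inr i then extWeight w Q (Sum.inr i) (g (Sum.inr i)) else 0) = Q := by
        intro i; simp [hg, extWeight]
      have h2 : ∀ v : V,
          (if g (Sum.inl v) ≠ Sum.inl v then extWeight w Q (Sum.inl v) (g (Sum.inl v)) else 0)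
          = (if v ∈ T then Q else 0) + (if f v ≠ v then w v (f v) else 0) := by
        intro v
        by_cases h : v ∈ T
        · simp [hg, h, extWeight, hTfix v h]
        · by_cases h' : f v = v
          · simp [hg, h, h', extWeight]
          · simp [hg, h, h', extWeight]
      rw [Finset.sum_congr rfl (fun i _ => h1 i), Finset.sum_congr rfl (fun v _ => h2 v),
        Finset.sum_add_distrib, Finset.sum_ite_mem, Finset.univ_inter, Finset.sum_const,
        Finset.sum_const, hTcard]
      have hlast : Mk = (1/2) * ∑ v ∈ Finset.univ, (if f v ≠ v then w v (f v) else 0) := by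
        rw [hfw, matchingWeight, Finset.sum_filter]
      simp only [card_univ, Fintype.card_fin, nsmul_eq_mul]
      rw [hlast]
      push_cast
      ring
  · -- upper bound
      classical
      set m := n - 2 * k with hm
      rintro x ⟨g, hg, rfl⟩
      have hginj : Function.Injective g := fun a b hab => by rw [← hg a, hab, hg b]
      set f : V → V := fun v => Sum.elim id (fun _ => v) (g (Sum.inl v)) with hfdef
      have hfl : ∀ v v', g (Sum.inl v) = Sum.inl v' → f v = v' := by
        intro v v' h; simp [hfdef, h]
      have hfr : ∀ v u, g (Sum.inl v) = Sum.inr u → f v = v := by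
        intro v u h; simp [hfdef, h]
      have hfinv : ∀ v, f (f v) = v := by
        intro v
        cases hgv : g (Sum.inl v) with
        | inl v' =>
          rw [hfl v v' hgv]
          have : g (Sum.inl v') = Sum.inl v := by rw [← hgv, hg]
          exact hfl v' v this
        | inr u => rw [hfr v u hgv, hfr v u hgv]
      set A : Finset V := Finset.univ.filter (fun v => (g (Sum.inl v)).isRight) with hA
      set B : Finset V := Finset.univ.filter (fun v => f v ≠ v) with hB
      set A' : Finset (Fin m) := Finset.univ.filter (fun u => (g (Sum.inr u)).isLeft) with hA'
      -- v ∈ B implies g (inl v) = inl (f v)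
      have hBg : ∀ v ∈ B, g (Sum.inl v) = Sum.inl (f v) := by
        intro v hv
        simp only [hB, mem_filter, mem_univ, true_and] at hv
        cases hgv : g (Sum.inl v) with
        | inl v' => rw [hfl v v' hgv]
        | inr u => exact absurd (hfr v u hgv) hv
      have hdisj : Disjoint A B := by
        rw [Finset.disjoint_left]
        intro v hvA hvB
        simp only [hA, mem_filter, mem_univ, true_and] at hvA
        have := hBg v hvB
        rw [this] at hvA
        simp at hvA
      have hABn : A.card + B.card ≤ n := by
        rw [← Finset.card_union_of_disjoint hdisj, ← hcard, ← card_univ]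
        exact Finset.card_le_card (Finset.subset_univ _)
      have hAm : A.card ≤ m := by
        calc A.card = (A.image (fun v => g (Sum.inl v))).card := by
              exact (Finset.card_image_of_injective _ (fun a b hab => Sum.inl_injective (hginj hab))).symm
          _ ≤ ((Finset.univ : Finset (Fin m)).image Sum.inr).card := by
              apply Finset.card_le_card
              intro y hy
              simp only [Finset.mem_image] at hy ⊢
              obtain ⟨v, hv, rfl⟩ := hy
              simp only [hA, mem_filter, mem_univ, true_and] at hv
              cases hgv : g (Sum.inl v) with
              | inl v' => rw [hgv] at hv; simp at hv
              | inr u => exact ⟨u, mem_univ u, rfl⟩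
          _ ≤ m := by
              rw [Finset.card_image_of_injective _ Sum.inr_injective]
              simp
      have hA'A : A'.card ≤ A.card := by
        calc A'.card = (A'.image (fun u => g (Sum.inr u))).card := by
              exact (Finset.card_image_of_injective _ (fun a b hab => Sum.inr_injective (hginj hab))).symm
          _ ≤ (A.image Sum.inl).card := by
              apply Finset.card_le_card
              intro y hy
              simp only [Finset.mem_image] at hy ⊢
              obtain ⟨u, hu, rfl⟩ := hy
              simp only [hA', mem_filter, mem_univ, true_and] at hu
              cases hgu : g (Sum.inr u) with
              | inl v =>
                refine ⟨v, ?_, rfl⟩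
                simp only [hA, mem_filter, mem_univ, true_and]
                have : g (Sum.inl v) = Sum.inr u := by rw [← hgu, hg]
                rw [this]; simp
              | inr u' => rw [hgu] at hu; simp at hu
          _ = A.card := Finset.card_image_of_injective _ Sum.inl_injective
      -- the weight bound
      set j : ℕ := (B.card - 2 * k + 1) / 2 with hj
      have hBj : B.card ≤ 2 * k + 2 * j := by omega
      have hwf : matchingWeight w f ≤ Mk + j * Q :=
        stmt19_bound_lemma k w hsymm Q hQ0 hQmax Mk hMk j f hfinv hBj
      -- decompose the sum
      rw [matchingWeight, Finset.sum_filter, Fintype.sum_sum_type]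
      have h1 : ∀ i : Fin m,
          (if g (Sum.inr i) ≠ Sum.inr i then extWeight w Q (Sum.inr i) (g (Sum.inr i)) else 0)
            ≤ (if i ∈ A' then Q else 0) := by
        intro i
        cases hgi : g (Sum.inr i) with
        | inl v =>
          have hiA' : i ∈ A' := by simp [hA', hgi]
          simp [hgi, extWeight, hiA']
        | inr u =>
          by_cases h : u = i <;> simp [hgi, extWeight, h] <;> split <;> simp [hQ0]
      have h2 : ∀ v : V,
          (if g (Sum.inl v) ≠ Sum.inl v then extWeight w Q (Sum.inl v) (g (Sum.inl v)) else 0)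
            = (if v ∈ A then Q else 0) + (if f v ≠ v then w v (f v) else 0) := by
        intro v
        cases hgv : g (Sum.inl v) with
        | inl v' =>
          have hvA : v ∉ A := by simp [hA, hgv]
          have hfv : f v = v' := hfl v v' hgv
          by_cases h : v' = v
          · simp [hgv, extWeight, hvA, hfv, h]
          · simp [hgv, extWeight, hvA, hfv, h]
        | inr u =>
          have hvA : v ∈ A := by simp [hA, hgv]
          have hfv : f v = v := hfr v u hgv
          simp [hgv, extWeight, hvA, hfv]
      have hS1 : ∑ i : Fin m,
          (if g (Sum.inr i) ≠ Sum.inr i then extWeight w Q (Sum.inr i) (g (Sum.inr i)) else 0)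
            ≤ (A'.card : ℝ) * Q := by
        calc _ ≤ ∑ i : Fin m, (if i ∈ A' then Q else 0) := Finset.sum_le_sum (fun i _ => h1 i)
          _ = (A'.card : ℝ) * Q := by
              rw [Finset.sum_ite_mem, Finset.univ_inter, Finset.sum_const, nsmul_eq_mul]
      have hS2 : ∑ v : V,
          (if g (Sum.inl v) ≠ Sum.inl v then extWeight w Q (Sum.inl v) (g (Sum.inl v)) else 0)
            = (A.card : ℝ) * Q + 2 * matchingWeight w f := by
        rw [Finset.sum_congr rfl (fun v _ => h2 v), Finset.sum_add_distrib,
          Finset.sum_ite_mem, Finset.univ_inter, Finset.sum_const, nsmul_eq_mul]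
        have : matchingWeight w f = (1/2) * ∑ v ∈ Finset.univ, (if f v ≠ v then w v (f v) else 0) := by
          rw [matchingWeight, Finset.sum_filter]
        rw [this]; ring
      have hkey : A'.card + A.card + 2 * j ≤ 2 * m := by omega
      have hkeyR : ((A'.card : ℝ) + A.card + 2 * j) * Q ≤ (2 * m : ℕ) * Q := by
        apply mul_le_mul_of_nonneg_right _ hQ0
        exact_mod_cast hkey
      push_cast at hkeyR
      linarith
end
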